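/- Let Ω ⊆ ℝ be a measurable set, N₀ > 0, P̄ ≥ 0, Q̄ ≥ 0, and let H_SD, H_SR, H_RD : Ω → ℂ and α̂ : Ω → ℂ be measurable. For measurable P : Ω → [0,∞) and Ξ : Ω → ℂ define the rate functional A(P, Ξ) = ∫_Ω (1/2)·log₂(1 + |H_SD(f) + H_RD(f)H_SR(f)Ξ(f)|²·P(f)/((|H_RD(f)Ξ(f)|² + 1)·N₀)) df and the feasibility conditions ∫_Ω P(f) df ≤ P̄ and ∫_Ω |Ξ(f)|²·(|H_SR(f)|²·P(f) + N₀) df ≤ Q̄. Then the supremum of A(P, Θ/(1 − α̂·Θ)) over all measurable P : Ω → [0,∞) and Θ : Ω → ℂ with α̂(f)·Θ(f) ≠ 1 for all f ∈ Ω, subject to feasibility of (P, Θ/(1 − α̂Θ)), equals the supremum of A(P, Ξ) over all measurable P : Ω → [0,∞) and Ξ : Ω → ℂ with α̂(f)·Ξ(f) ≠ −1 for all f ∈ Ω, subject to feasibility of (P, Ξ). -/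

import Mathlib

open MeasureTheory

/-- The rate functional `A(P, Ξ)` of problem (13): the integral over the band `Ω`
of the per-frequency achievable rate. -/
noncomputable def rateFunctional (Ω : Set ℝ) (N₀ : ℝ) (HSD HSR HRD : ℝ → ℂ)
    (P : ℝ → ℝ) (Ξ : ℝ → ℂ) : ℝ :=
  ∫ f in Ω, (1 / 2) * Real.logb 2 (1 +
    ‖HSD f + HRD f * HSR f * Ξ f‖ ^ 2 * P f /
      ((‖HRD f * Ξ f‖ ^ 2 + 1) * N₀))

/-- The feasibility conditions of problem (13): the source power constraint
`∫_Ω P ≤ P̄` and the relay power constraint `∫_Ω |Ξ|²(|H_SR|²P + N₀) ≤ Q̄`. -/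
def feasible (Ω : Set ℝ) (N₀ Pbar Qbar : ℝ) (HSR : ℝ → ℂ)
    (P : ℝ → ℝ) (Ξ : ℝ → ℂ) : Prop :=
  (∫ f in Ω, P f) ≤ Pbar ∧
  (∫ f in Ω, ‖Ξ f‖ ^ 2 * (‖HSR f‖ ^ 2 * P f + N₀)) ≤ Qbar

/-- Integral form of the reformulation from problem (9) to problem (13) (basis of
Remark 3.1): the supremum of the achievable rate over feasible source spectra `P`
and relay filters `Θ` (with `α̂(f)Θ(f) ≠ 1` on `Ω`), expressed through the
effective gain `Ξ = Θ/(1 − α̂Θ)`, equals the supremum over feasible `(P, Ξ)` with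
`α̂(f)Ξ(f) ≠ −1` on `Ω`; in particular it does not depend on the loop-back
channel `α̂`. -/
theorem fd_ff_rate_reformulation
    (Ω : Set ℝ) (hΩ : MeasurableSet Ω) (N₀ Pbar Qbar : ℝ)
    (hN₀ : 0 < N₀) (hPbar : 0 ≤ Pbar) (hQbar : 0 ≤ Qbar)
    (HSD HSR HRD αh : ℝ → ℂ)
    (hSDm : Measurable HSD) (hSRm : Measurable HSR) (hRDm : Measurable HRD)
    (hαm : Measurable αh) :
    sSup {r : ℝ | ∃ P : ℝ → ℝ, ∃ Θ : ℝ → ℂ,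
        Measurable P ∧ (∀ f, 0 ≤ P f) ∧ Measurable Θ ∧
        (∀ f ∈ Ω, αh f * Θ f ≠ 1) ∧
        feasible Ω N₀ Pbar Qbar HSR P (fun f => Θ f / (1 - αh f * Θ f)) ∧
        r = rateFunctional Ω N₀ HSD HSR HRD P (fun f => Θ f / (1 - αh f * Θ f))}
      = sSup {r : ℝ | ∃ P : ℝ → ℝ, ∃ Ξ : ℝ → ℂ,
        Measurable P ∧ (∀ f, 0 ≤ P f) ∧ Measurable Ξ ∧
        (∀ f ∈ Ω, αh f * Ξ f ≠ -1) ∧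
        feasible Ω N₀ Pbar Qbar HSR P Ξ ∧
        r = rateFunctional Ω N₀ HSD HSR HRD P Ξ} := by
  congr 1
  ext r
  constructor
  · rintro ⟨P, Θ, hPm, hP0, hΘm, hne, hfeas, hr⟩
    refine ⟨P, fun f => Θ f / (1 - αh f * Θ f), hPm, hP0,
      hΘm.div (measurable_const.sub (hαm.mul hΘm)), ?_, hfeas, hr⟩
    intro f hf h
    have h1 : (1 : ℂ) - αh f * Θ f ≠ 0 := sub_ne_zero.mpr fun e => hne f hf e.symm
    rw [mul_div_assoc', div_eq_iff h1] at h
    exact one_ne_zero (by linear_combination h : (1 : ℂ) = 0)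
  · rintro ⟨P, Ξ, hPm, hP0, hΞm, hne, hfeas, hr⟩
    refine ⟨P, fun f => Ξ f / (1 + αh f * Ξ f), hPm, hP0,
      hΞm.div (measurable_const.add (hαm.mul hΞm)), ?_, ?_, ?_⟩
    · intro f hf h
      have h1 : (1 : ℂ) + αh f * Ξ f ≠ 0 := fun e => hne f hf (by linear_combination e)
      rw [mul_div_assoc', div_eq_iff h1] at h
      exact one_ne_zero (by linear_combination -h : (1 : ℂ) = 0)
    all_goals {
      have key : ∀ f ∈ Ω,
          (Ξ f / (1 + αh f * Ξ f)) / (1 - αh f * (Ξ f / (1 + αh f * Ξ f))) = Ξ f := by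
        intro f hf
        have h1 : (1 : ℂ) + αh f * Ξ f ≠ 0 := fun e => hne f hf (by linear_combination e)
        rw [mul_div_assoc', one_sub_div h1, add_sub_cancel_right, div_div_div_cancel_right₀ h1, div_one]
      beta_reduce
      first
      | (obtain ⟨c1, c2⟩ := hfeas
         exact ⟨c1, le_trans
           (le_of_eq (setIntegral_congr_fun hΩ (fun f hf => by simp only [key f hf])))
           c2⟩)
      | (rw [hr]
         unfold rateFunctional
         exact (setIntegral_congr_fun hΩ (fun f hf => by simp only [key f hf])).symm)
    }
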